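/- Let (X,d) be a complete separable metric space satisfying the semiparallelogram law, (Ω,𝒜) a measurable space, and B: Ω → (nonempty bounded subsets of X) be given by B(ω) = { f_n(ω) : n ∈ ℕ } for measurable maps f_n: Ω → X with uniformly bounded range (all f_n(ω) lie in a fixed bounded set). Then the map ω ↦ σ(ω), assigning to ω the circumcenter of B(ω), is measurable. -/

import Mathlib

open Metric Filter Topology

variable {X : Type*} [MetricSpace X]

/-- Supremum of distances from `x` to points of `B`. -/
noncomputable def supDist (B : Set X) (x : X) : ℝ := ⨆ y : B, dist x (y : X)

/-- The circumradius of `B`. -/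
noncomputable def circumradius (B : Set X) : ℝ := ⨅ x : X, supDist B x

/-- `x` is a circumcenter of `B`. -/
def IsCircumcenter (B : Set X) (x : X) : Prop := ∀ y ∈ B, dist x y ≤ circumradius B

/-- The semiparallelogram law. -/
def SemiparLaw (X : Type*) [MetricSpace X] : Prop :=
  ∀ x1 x2 : X, ∃ z : X, ∀ x : X,
    dist x1 x2 ^ 2 + 4 * dist z x ^ 2 ≤ 2 * dist x x1 ^ 2 + 2 * dist x x2 ^ 2

/-- Measurability of the circumcenter of a measurable family of countable uniformly
bounded sets, in a complete separable space with the semiparallelogram law. -/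
theorem stmt17 {Ω : Type*} [MeasurableSpace Ω] [CompleteSpace X]
    [TopologicalSpace.SeparableSpace X] [MeasurableSpace X] [BorelSpace X]
    (hX : SemiparLaw X) (f : ℕ → Ω → X) (hf : ∀ n : ℕ, Measurable (f n))
    (K : Set X) (hK : Bornology.IsBounded K) (hfK : ∀ n ω, f n ω ∈ K) :
    ∃ σ : Ω → X, Measurable σ ∧
      ∀ ω : Ω, IsCircumcenter (Set.range fun n : ℕ => f n ω) (σ ω) := by
  classical
  rcases isEmpty_or_nonempty Ω with hΩ | hΩ
  · exact ⟨f 0, hf 0, fun ω => (IsEmpty.false ω).elim⟩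
  obtain ⟨ω0⟩ := hΩ
  have hXne : Nonempty X := ⟨f 0 ω0⟩
  obtain ⟨C, hC⟩ := Metric.isBounded_iff.mp hK
  set q : ℕ → X := TopologicalSpace.denseSeq X with hqdef
  have hq : DenseRange q := TopologicalSpace.denseRange_denseSeq X
  set s : Ω → X → ℝ := fun ω x => ⨆ n, dist x (f n ω) with hsdef
  have hbdd : ∀ ω x, BddAbove (Set.range fun n => dist x (f n ω)) := by
    intro ω x
    refine ⟨dist x (f 0 ω) + C, ?_⟩
    rintro r ⟨n, rfl⟩
    calc dist x (f n ω) ≤ dist x (f 0 ω) + dist (f 0 ω) (f n ω) := dist_triangle _ _ _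
      _ ≤ dist x (f 0 ω) + C := by gcongr; exact hC (hfK 0 ω) (hfK n ω)
  have hle_s : ∀ ω x n, dist x (f n ω) ≤ s ω x := fun ω x n => le_ciSup (hbdd ω x) n
  have hs_nonneg : ∀ ω x, 0 ≤ s ω x := fun ω x => le_trans dist_nonneg (hle_s ω x 0)
  have hs_le : ∀ ω x (r : ℝ), (∀ n, dist x (f n ω) ≤ r) → s ω x ≤ r :=
    fun ω x r h => ciSup_le h
  have hs_lip : ∀ ω x x', s ω x ≤ dist x x' + s ω x' := by
    intro ω x x'
    refine ciSup_le fun n => (dist_triangle x x' (f n ω)).trans ?_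
    gcongr
    exact hle_s ω x' n
  have hsupDist : ∀ ω x, supDist (Set.range fun n : ℕ => f n ω) x = s ω x := by
    intro ω x
    have hne : Nonempty ↥(Set.range fun n : ℕ => f n ω) := ⟨⟨f 0 ω, 0, rfl⟩⟩
    have hbb : BddAbove (Set.range fun y : ↥(Set.range fun n : ℕ => f n ω) =>
        dist x (y : X)) := by
      refine ⟨dist x (f 0 ω) + C, ?_⟩
      rintro r ⟨⟨y, n, rfl⟩, rfl⟩
      calc dist x (f n ω) ≤ dist x (f 0 ω) + dist (f 0 ω) (f n ω) := dist_triangle _ _ _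
        _ ≤ dist x (f 0 ω) + C := by gcongr; exact hC (hfK 0 ω) (hfK n ω)
    refine le_antisymm (ciSup_le ?_) (ciSup_le fun n => ?_)
    · rintro ⟨y, n, rfl⟩; exact hle_s ω x n
    · exact le_ciSup_of_le hbb (⟨f n ω, n, rfl⟩ : ↥(Set.range fun n : ℕ => f n ω)) le_rfl
  set R : Ω → ℝ := fun ω => ⨅ m, s ω (q m) with hRdef
  have hR' : ∀ ω, R ω = ⨅ m, s ω (q m) := fun _ => rfl
  have hbbR : ∀ ω, BddBelow (Set.range fun m => s ω (q m)) := by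
    intro ω
    exact ⟨0, by rintro r ⟨m, rfl⟩; exact hs_nonneg ω (q m)⟩
  have hR_nonneg : ∀ ω, 0 ≤ R ω := fun ω => le_ciInf fun m => hs_nonneg ω (q m)
  have hR_le : ∀ ω x, R ω ≤ s ω x := by
    intro ω x
    refine le_of_forall_pos_le_add fun ε hε => ?_
    obtain ⟨m, hm⟩ := hq.exists_dist_lt x hε
    calc R ω ≤ s ω (q m) := ciInf_le (hbbR ω) m
      _ ≤ dist (q m) x + s ω x := hs_lip ω (q m) x
      _ ≤ s ω x + ε := by rw [dist_comm] at hm; linarith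
  have hR_eq : ∀ ω, circumradius (Set.range fun n : ℕ => f n ω) = R ω := by
    intro ω
    unfold circumradius
    have hbb : BddBelow (Set.range fun x : X =>
        supDist (Set.range fun n : ℕ => f n ω) x) := by
      refine ⟨0, ?_⟩
      rintro r ⟨x, rfl⟩
      simpa only [hsupDist] using hs_nonneg ω x
    refine le_antisymm (le_ciInf fun m => ?_) (le_ciInf fun x => ?_)
    · exact (ciInf_le hbb (q m)).trans (hsupDist ω (q m)).le
    · rw [hsupDist]; exact hR_le ω x
  have hs_meas : ∀ x, Measurable fun ω => s ω x :=
    fun x => Measurable.iSup fun n => measurable_const.dist (hf n)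
  have hR_meas : Measurable R := Measurable.iInf fun m => hs_meas (q m)
  -- key semiparallelogram estimate
  have key : ∀ ω x1 x2 r1 r2, s ω x1 ≤ r1 → s ω x2 ≤ r2 →
      dist x1 x2 ^ 2 ≤ 2 * r1 ^ 2 + 2 * r2 ^ 2 - 4 * R ω ^ 2 := by
    intro ω x1 x2 r1 r2 h1 h2
    obtain ⟨z, hz⟩ := hX x1 x2
    have hb : ∀ n, dist x1 x2 ^ 2 + 4 * dist z (f n ω) ^ 2 ≤ 2 * r1 ^ 2 + 2 * r2 ^ 2 := by
      intro n
      have e1 : dist (f n ω) x1 ≤ r1 := by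
        rw [dist_comm]; exact (hle_s ω x1 n).trans h1
      have e2 : dist (f n ω) x2 ≤ r2 := by
        rw [dist_comm]; exact (hle_s ω x2 n).trans h2
      have h0 := hz (f n ω)
      nlinarith [dist_nonneg (x := f n ω) (y := x1), dist_nonneg (x := f n ω) (y := x2)]
    set M : ℝ := (2 * r1 ^ 2 + 2 * r2 ^ 2 - dist x1 x2 ^ 2) / 4 with hM
    have hM0 : 0 ≤ M := by
      have := hb 0
      have := sq_nonneg (dist z (f 0 ω))
      rw [hM]; nlinarith
    have hzM : s ω z ≤ Real.sqrt M := by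
      refine hs_le _ _ _ fun n => (Real.le_sqrt dist_nonneg hM0).mpr ?_
      have := hb n
      rw [hM]; linarith
    have hRM : R ω ≤ Real.sqrt M := (hR_le ω z).trans hzM
    have hR2 : R ω ^ 2 ≤ M := by
      calc R ω ^ 2 ≤ Real.sqrt M ^ 2 := by gcongr; exact hR_nonneg ω
        _ = M := Real.sq_sqrt hM0
    rw [hM] at hR2; linarith
  -- approximating sequence
  have hex : ∀ k : ℕ, ∀ ω, ∃ m, s ω (q m) < R ω + 1 / (k + 1) := by
    intro k ω
    have hpos : (0:ℝ) < 1 / (k + 1) := by positivity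
    have : (⨅ m, s ω (q m)) < R ω + 1 / (k + 1) := by
      rw [← hR' ω]; linarith
    exact exists_lt_of_ciInf_lt this
  set g : ℕ → Ω → X := fun k ω => q (Nat.find (hex k ω)) with hg
  have hg_meas : ∀ k, Measurable (g k) := by
    intro k
    exact Measurable.find (f := fun n (_ : Ω) => q n)
      (fun n => measurable_const)
      (fun n => measurableSet_lt (hs_meas (q n)) (hR_meas.add measurable_const))
      (hex k)
  have hgP : ∀ k ω, s ω (g k ω) < R ω + 1 / (k + 1) := fun k ω => Nat.find_spec (hex k ω)
  -- Cauchy property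
  have hcauchy : ∀ ω, CauchySeq fun k => g k ω := by
    intro ω
    have hR0 := hR_nonneg ω
    refine cauchySeq_of_le_tendsto_0
      (fun N : ℕ => Real.sqrt (8 * R ω * (1 / (N + 1)) + 4 * (1 / (N + 1 : ℝ)) ^ 2)) ?_ ?_
    · intro j k N hj hk
      have hj1 : (1:ℝ) / (j + 1) ≤ 1 / (N + 1) := by
        gcongr
      have hk1 : (1:ℝ) / (k + 1) ≤ 1 / (N + 1) := by
        gcongr
      have hjp : (0:ℝ) < 1 / (j + 1) := by positivity
      have hkp : (0:ℝ) < 1 / (k + 1) := by positivity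
      have h2 := key ω (g j ω) (g k ω) (R ω + 1 / (j + 1)) (R ω + 1 / (k + 1))
        (hgP j ω).le (hgP k ω).le
      have hnn : (0:ℝ) ≤ 8 * R ω * (1 / (N + 1)) + 4 * (1 / (N + 1 : ℝ)) ^ 2 := by
        positivity
      refine (Real.le_sqrt dist_nonneg hnn).mpr ?_
      nlinarith [mul_le_mul_of_nonneg_left hj1 hR0, mul_le_mul_of_nonneg_left hk1 hR0,
        sq_nonneg ((1:ℝ) / (j + 1) - 1 / (N + 1)), sq_nonneg ((1:ℝ) / (k + 1) - 1 / (N + 1))]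
    · have h1 := tendsto_one_div_add_atTop_nhds_zero_nat (𝕜 := ℝ)
      have hu : Tendsto (fun N : ℕ => 8 * R ω * (1 / (N + 1)) + 4 * (1 / (N + 1 : ℝ)) ^ 2)
          atTop (𝓝 0) := by
        have := (h1.const_mul (8 * R ω)).add ((h1.pow 2).const_mul 4)
        simpa [mul_comm] using this
      have := (Real.continuous_sqrt.tendsto 0).comp hu
      simpa [Real.sqrt_zero, Function.comp_def] using this
  have hlim : ∀ ω, ∃ l, Tendsto (fun k => g k ω) atTop (𝓝 l) :=
    fun ω => cauchySeq_tendsto_of_complete (hcauchy ω)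
  refine ⟨fun ω => (hlim ω).choose, ?_, ?_⟩
  · refine measurable_of_tendsto_metrizable (fun k => hg_meas k) ?_
    rw [tendsto_pi_nhds]
    exact fun ω => (hlim ω).choose_spec
  · intro ω y hy
    obtain ⟨n, rfl⟩ := hy
    rw [hR_eq ω]
    have h1 : Tendsto (fun k => dist (g k ω) (f n ω)) atTop
        (𝓝 (dist ((hlim ω).choose) (f n ω))) :=
      ((hlim ω).choose_spec).dist tendsto_const_nhds
    have h2 : Tendsto (fun k : ℕ => R ω + 1 / (k + 1)) atTop (𝓝 (R ω)) := by
      simpa using tendsto_const_nhds.add (tendsto_one_div_add_atTop_nhds_zero_nat (𝕜 := ℝ))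
    exact le_of_tendsto_of_tendsto' h1 h2 fun k => (hle_s ω (g k ω) n).trans (hgP k ω).le
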